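/- arXiv:1912.09262 — 2 statements merged into one kernel-verified Lean document; each statement's English description precedes it below -/
import Mathlib

section
/- D2D communication strictly reduces the minimum pipelined NDT if and only if the cache size lies in the intermediate regime: for 0 < r_F < 1, μ ∈ [0,1], and r_D > 0, one has δ_P(μ, r_F, r_D) < δ_P(μ, r_F, 0) if and only if (1 − r_F)/(2 + r_F) < μ < 1 − r_F. -/
noncomputable def ndtP (mu rF rD : ℝ) : ℝ :=
  max (max ((1 - 2*mu)/rF) ((2 - mu)/(1 + rF + rD))) 1

theorem stmt10 (mu rF rD : ℝ) (hF1 : 0 < rF) (hF2 : rF < 1)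
    (hmu : mu ∈ Set.Icc (0:ℝ) 1) (hD : 0 < rD) :
    ndtP mu rF rD < ndtP mu rF 0 ↔
      ((1 - rF)/(2 + rF) < mu ∧ mu < 1 - rF) := by
  obtain ⟨hm0, hm1⟩ := hmu
  have hden : (0:ℝ) < 1 + rF := by linarith
  have hdend : (0:ℝ) < 1 + rF + rD := by linarith
  have h2F : (0:ℝ) < 2 + rF := by linarith
  set a := (1 - 2*mu)/rF with ha
  set b0 := (2 - mu)/(1 + rF) with hb0
  set bd := (2 - mu)/(1 + rF + rD) with hbd
  have hbdlt : bd < b0 :=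
    div_lt_div_of_pos_left (by linarith) hden (by linarith)
  have e1 : 1 < b0 ↔ mu < 1 - rF := by
    rw [hb0, lt_div_iff₀ hden]
    constructor <;> intro h <;> linarith
  have e2 : a < b0 ↔ (1 - rF)/(2 + rF) < mu := by
    rw [ha, hb0, div_lt_div_iff₀ hF1 hden, div_lt_iff₀ h2F]
    constructor <;> intro h <;> nlinarith
  unfold ndtP
  rw [add_zero]
  constructor
  · intro h
    have hkey : max a 1 < b0 := by
      by_contra hc
      push_neg at hc
      have hR : max (max a b0) 1 ≤ max a 1 := by
        apply max_le _ (le_max_right _ _)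
        exact max_le (le_max_left _ _) hc
      have hL : max a 1 ≤ max (max a bd) 1 :=
        max_le (le_trans (le_max_left a bd) (le_max_left _ _)) (le_max_right _ _)
      linarith
    exact ⟨e2.mp (lt_of_le_of_lt (le_max_left a 1) hkey),
           e1.mp (lt_of_le_of_lt (le_max_right a 1) hkey)⟩
  · rintro ⟨h1, h2⟩
    have hab : a < b0 := e2.mpr h1
    have h1b : 1 < b0 := e1.mpr h2
    have hL : max (max a bd) 1 < b0 :=
      max_lt (max_lt hab hbdlt) h1b
    exact lt_of_lt_of_le hL (le_trans (le_max_right a b0) (le_max_left _ _))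
end

section
/- Let 0 < r_F < 1 and suppose (1 − r_F)/(2 + r_F) < μ < 1 − r_F. Then δ_P(μ, r_F, 0) = (2 − μ)/(1 + r_F) > 1, and for every r_D > 0, δ_P(μ, r_F, r_D) < δ_P(μ, r_F, 0). -/
theorem stmt16 (mu rF : ℝ) (hF1 : 0 < rF) (hF2 : rF < 1)
    (hmu1 : (1 - rF)/(2 + rF) < mu) (hmu2 : mu < 1 - rF) :
    (ndtP mu rF 0 = (2 - mu)/(1 + rF) ∧ 1 < ndtP mu rF 0) ∧
    ∀ rD : ℝ, 0 < rD → ndtP mu rF rD < ndtP mu rF 0 := by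
  have h2F : (0:ℝ) < 2 + rF := by linarith
  have hmu1' : 1 - rF < mu * (2 + rF) := by
    have := (div_lt_iff₀ h2F).mp hmu1; linarith
  have h1F : (0:ℝ) < 1 + rF := by linarith
  have hA : (1 - 2*mu)/rF < (2 - mu)/(1 + rF) := by
    rw [div_lt_div_iff₀ hF1 h1F]; nlinarith
  have hB : (1:ℝ) < (2 - mu)/(1 + rF) := by
    rw [lt_div_iff₀ h1F]; linarith
  have h0 : ndtP mu rF 0 = (2 - mu)/(1 + rF) := by
    unfold ndtP
    rw [show (1:ℝ) + rF + 0 = 1 + rF by ring]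
    rw [max_eq_right hA.le, max_eq_left hB.le]
  refine ⟨⟨h0, by rw [h0]; exact hB⟩, ?_⟩
  intro rD hD
  rw [h0]
  have hden : (0:ℝ) < 1 + rF + rD := by linarith
  have hBD : (2 - mu)/(1 + rF + rD) < (2 - mu)/(1 + rF) := by
    apply div_lt_div_of_pos_left (by linarith) h1F (by linarith)
  unfold ndtP
  exact max_lt (max_lt (hA.trans_le le_rfl) hBD) hB
end
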